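/- For every pair of m-row diagrams C₁ and C₂, [C₁ ⋆ C₂] = [C₁] · [C₂] in ℤ/3ℤ[Ex_m]/J_m; that is, C ↦ [C] is a semigroup homomorphism from the concatenation semigroup of m-row diagrams to the multiplicative semigroup of ℤ/3ℤ[Ex_m]/J_m. -/

import Mathlib

open Finset

/-- The excess group `Ex_m`: triples `(v, h, ε)` with `v, h ∈ (ℤ/2ℤ)^m`,
`ε ∈ {±1}` (realized as `ℤˣ`), and the coordinates of `v` summing to `0`. -/
@[ext]
structure Ex (m : ℕ) where
  v : Fin m → ZMod 2
  h : Fin m → ZMod 2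
  ε : ℤˣ
  hv : ∑ i, v i = 0

namespace Ex

variable {m : ℕ}

/-- The exponent of `(−1)` in the product `(v,h,ε)·(v',h',ε')`:
`Σ_{1≤i<j≤m} v_j (v'_i + h'_i) + Σ_{1≤i≤j≤m} v'_j h_i`, computed from the
representatives in `{0,1}` of the `ℤ/2ℤ`-coordinates. -/
def expo (x y : Ex m) : ℕ :=
  (∑ p ∈ Finset.univ.filter (fun p : Fin m × Fin m => p.1 < p.2),
      (x.v p.2).val * ((y.v p.1).val + (y.h p.1).val)) +
  ∑ p ∈ Finset.univ.filter (fun p : Fin m × Fin m => p.1 ≤ p.2),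
      (y.v p.2).val * (x.h p.1).val

/-- The multiplication of `Ex_m`:
`(v,h,ε)·(v',h',ε') = (v+v', h+h', ε ε' (−1)^{Σ_{i<j} v_j(v'_i+h'_i) + Σ_{i≤j} v'_j h_i})`. -/
def mul' (x y : Ex m) : Ex m :=
  ⟨x.v + y.v, x.h + y.h, x.ε * y.ε * (-1) ^ expo x y, by
    simp [Finset.sum_add_distrib, x.hv, y.hv]⟩

/-- The identity element `(0, 0, +1)` of `Ex_m`. -/
def one' : Ex m := ⟨0, 0, 1, by simp⟩

/-- The element `(0, 0, −1)` of `Ex_m`. -/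
def negOne' : Ex m := ⟨0, 0, -1, by simp⟩

/-- Inversion in `Ex_m`. -/
def inv' (x : Ex m) : Ex m := ⟨x.v, x.h, x.ε * (-1) ^ expo x x, x.hv⟩

-- auxiliary: the ZMod-2-valued bilinear form underlying `expo`
private def Bf (a b c d : Fin m → ZMod 2) : ZMod 2 :=
  (∑ p ∈ Finset.univ.filter (fun p : Fin m × Fin m => p.1 < p.2),
      a p.2 * (c p.1 + d p.1)) +
  ∑ p ∈ Finset.univ.filter (fun p : Fin m × Fin m => p.1 ≤ p.2),
      c p.2 * b p.1

private def χ (a : ZMod 2) : ℤˣ := (-1) ^ a.val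

private lemma χ_add : ∀ a b : ZMod 2, χ (a + b) = χ a * χ b := by decide

private lemma val_cast : ∀ a : ZMod 2, ((a.val : ℕ) : ZMod 2) = a := by decide

private lemma neg_one_pow_nat (s : ℕ) : ((-1 : ℤˣ)) ^ s = χ ((s : ZMod 2)) := by
  induction s with
  | zero => simp [χ]
  | succ k ih =>
      rw [pow_succ, ih]
      have hc : ((k + 1 : ℕ) : ZMod 2) = ((k : ℕ) : ZMod 2) + 1 := by push_cast; ring
      have hx : ∀ a : ZMod 2, χ (a + 1) = χ a * (-1) := by decide
      rw [hc, hx]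

private lemma expo_cast (x y : Ex m) :
    ((expo x y : ℕ) : ZMod 2) = Bf x.v x.h y.v y.h := by
  unfold expo Bf
  push_cast
  simp [val_cast]

private lemma sign_eq (x y : Ex m) :
    ((-1 : ℤˣ)) ^ expo x y = χ (Bf x.v x.h y.v y.h) := by
  rw [neg_one_pow_nat, expo_cast]

private lemma Bf_add_left (a b a' b' c d : Fin m → ZMod 2) :
    Bf (a + a') (b + b') c d = Bf a b c d + Bf a' b' c d := by
  unfold Bf
  simp only [Pi.add_apply, add_mul, mul_add, Finset.sum_add_distrib]
  ring

private lemma Bf_add_right (a b c d c' d' : Fin m → ZMod 2) :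
    Bf a b (c + c') (d + d') = Bf a b c d + Bf a b c' d' := by
  unfold Bf
  simp only [Pi.add_apply, add_mul, mul_add, Finset.sum_add_distrib]
  ring

private lemma Bf_zero_left (c d : Fin m → ZMod 2) : Bf 0 0 c d = 0 := by
  unfold Bf; simp

private lemma Bf_zero_right (a b : Fin m → ZMod 2) : Bf a b 0 0 = 0 := by
  unfold Bf; simp

instance : Group (Ex m) where
  mul := mul'
  one := one'
  inv := inv'
  mul_assoc a b c := by
    refine Ex.ext ?_ ?_ ?_
    · show (a.v + b.v) + c.v = a.v + (b.v + c.v)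
      exact add_assoc _ _ _
    · show (a.h + b.h) + c.h = a.h + (b.h + c.h)
      exact add_assoc _ _ _
    · show (a.ε * b.ε * (-1) ^ expo a b) * c.ε * (-1) ^ expo (mul' a b) c =
        a.ε * (b.ε * c.ε * (-1) ^ expo b c) * (-1) ^ expo a (mul' b c)
      rw [sign_eq, sign_eq, sign_eq, sign_eq]
      have h1 : (mul' a b).v = a.v + b.v := rfl
      have h2 : (mul' a b).h = a.h + b.h := rfl
      have h3 : (mul' b c).v = b.v + c.v := rfl
      have h4 : (mul' b c).h = b.h + c.h := rfl
      rw [h1, h2, h3, h4, Bf_add_left, Bf_add_right, χ_add, χ_add]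
      simp only [mul_assoc, mul_comm, mul_left_comm]
  one_mul a := by
    refine Ex.ext ?_ ?_ ?_
    · show 0 + a.v = a.v
      exact zero_add _
    · show 0 + a.h = a.h
      exact zero_add _
    · show 1 * a.ε * (-1) ^ expo (one' : Ex m) a = a.ε
      have h0 : expo (one' : Ex m) a = 0 := by simp [expo, one']
      rw [h0]; simp
  mul_one a := by
    refine Ex.ext ?_ ?_ ?_
    · show a.v + 0 = a.v
      exact add_zero _
    · show a.h + 0 = a.h
      exact add_zero _
    · show a.ε * 1 * (-1) ^ expo a (one' : Ex m) = a.ε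
      have h0 : expo a (one' : Ex m) = 0 := by simp [expo, one']
      rw [h0]; simp
  inv_mul_cancel a := by
    refine Ex.ext ?_ ?_ ?_
    · show a.v + a.v = 0
      funext i
      exact CharTwo.add_self_eq_zero _
    · show a.h + a.h = 0
      funext i
      exact CharTwo.add_self_eq_zero _
    · show (a.ε * (-1) ^ expo a a) * a.ε * (-1) ^ expo (inv' a) a = 1
      have he : expo (inv' a) a = expo a a := rfl
      rw [he]
      have h1 : a.ε * a.ε = 1 := Int.units_mul_self a.ε
      have h2 : ((-1 : ℤˣ)) ^ expo a a * (-1) ^ expo a a = 1 :=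
        Int.units_mul_self _
      calc (a.ε * (-1) ^ expo a a) * a.ε * (-1) ^ expo a a
          = (a.ε * a.ε) * ((-1) ^ expo a a * (-1) ^ expo a a) := by
            simp only [mul_assoc, mul_comm, mul_left_comm]
        _ = 1 := by rw [h1, h2, one_mul]

lemma mul_def (x y : Ex m) : x * y = mul' x y := rfl
lemma one_def : (1 : Ex m) = one' := rfl

end Ex

open Finset

/-- An `m × n` diagram: each square is black or white (`true` = white). -/
abbrev Diagram (m n : ℕ) := Fin m → Fin n → Bool

/-- The finite set of white squares of a diagram. -/
def whites {m n : ℕ} (D : Diagram m n) : Finset (Fin m × Fin n) :=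
  Finset.univ.filter fun p => D p.1 p.2 = true

/-- Reading order (strict): row-by-row from top to bottom, left to right in each
row; this is the order of the labels of the white squares. -/
def rlt {m n : ℕ} (p q : Fin m × Fin n) : Prop :=
  p.1 < q.1 ∨ (p.1 = q.1 ∧ p.2 < q.2)

instance {m n : ℕ} : DecidableRel (@rlt m n) := fun _ _ => by unfold rlt; infer_instance

/-- The excess of a set `S` of squares: the vector in `(ℤ/2ℤ)^m` whose `i`-th
coordinate is the number of elements of `S` in row `i`, reduced mod 2. -/
def excess {m n : ℕ} (S : Finset (Fin m × Fin n)) : Fin m → ZMod 2 :=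
  fun i => ((S.filter fun p => p.1 = i).card : ZMod 2)

/-- `(V, H)` is a decomposition of the diagram `D`: `V` and `H` are disjoint,
their union is the set of white squares of `D`, and every column of `D` contains
an even number of elements of `V`. -/
def IsDecomp {m n : ℕ} (D : Diagram m n) (V H : Finset (Fin m × Fin n)) : Prop :=
  Disjoint V H ∧ V ∪ H = whites D ∧
    ∀ j : Fin n, Even ((V.filter fun p => p.2 = j).card)

/-- `inv(V)`: the number of pairs `(p, q) ∈ V × V` with `p` before `q` in reading
order (i.e. with smaller label) and `q` strictly below and strictly to the left
of `p`. -/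
def invV {m n : ℕ} (V : Finset (Fin m × Fin n)) : ℕ :=
  ((V ×ˢ V).filter fun pq =>
    rlt pq.1 pq.2 ∧ pq.1.1 < pq.2.1 ∧ pq.2.2 < pq.1.2).card

/-- `inv(V|H)`: the number of pairs `(p, q)` with `p ∈ H`, `q ∈ V` and `p` before
`q` in reading order (i.e. with smaller label). -/
def invMix {m n : ℕ} (V H : Finset (Fin m × Fin n)) : ℕ :=
  ((H ×ˢ V).filter fun pq => rlt pq.1 pq.2).card

/-- The signature `sgn(V,H) = (−1)^{inv(V) + inv(V|H)}` of a decomposition,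
as a sign in `ℤˣ`. -/
def sgnVH {m n : ℕ} (V H : Finset (Fin m × Fin n)) : ℤˣ :=
  (-1) ^ (invV V + invMix V H)

/-- The element `f(V,H) = (excess(V), excess(H), sgn(V,H))` of `Ex_m` attached to
a decomposition `(V,H)`; the proof that the coordinates of `excess(V)` sum to
zero (automatic for decompositions) is supplied as an argument. -/
def fEx {m n : ℕ} (V H : Finset (Fin m × Fin n))
    (hV : ∑ i, excess V i = 0) : Ex m :=
  ⟨excess V, excess H, sgnVH V H, hV⟩

/-- Concatenation of diagrams: `hcat D D'` places `D'` immediately to the right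
of `D`. -/
def hcat {m n₁ n₂ : ℕ} (D : Diagram m n₁) (D' : Diagram m n₂) :
    Diagram m (n₁ + n₂) :=
  fun i j => Fin.addCases (fun j₁ => D i j₁) (fun j₂ => D' i j₂) j

/-- The squares of the left factor, viewed inside the concatenated diagram. -/
def leftSq {m n₁ : ℕ} (n₂ : ℕ) (p : Fin m × Fin n₁) : Fin m × Fin (n₁ + n₂) :=
  (p.1, Fin.castAdd n₂ p.2)

/-- The squares of the right factor, viewed inside the concatenated diagram. -/
def rightSq {m n₂ : ℕ} (n₁ : ℕ) (p : Fin m × Fin n₂) : Fin m × Fin (n₁ + n₂) :=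
  (p.1, Fin.natAdd n₁ p.2)

/-- The part of an induced decomposition of a concatenation coming from parts
`S` (of the left diagram) and `S'` (of the right diagram). -/
def starPart {m n₁ n₂ : ℕ} (S : Finset (Fin m × Fin n₁))
    (S' : Finset (Fin m × Fin n₂)) : Finset (Fin m × Fin (n₁ + n₂)) :=
  S.image (leftSq n₂) ∪ S'.image (rightSq n₁)

lemma sum_excess_eq_card {m n : ℕ} (V : Finset (Fin m × Fin n)) :
    ∑ i, excess V i = (V.card : ZMod 2) := by
  unfold excess
  rw [← Nat.cast_sum]
  congr 1
  exact (Finset.card_eq_sum_card_fiberwise (fun p _ => Finset.mem_univ p.1)).symm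

/-- For a decomposition `(V,H)`, the coordinates of `excess(V)` sum to zero. -/
lemma IsDecomp.sum_excess_zero {m n : ℕ} {D : Diagram m n}
    {V H : Finset (Fin m × Fin n)} (h : IsDecomp D V H) :
    ∑ i, excess V i = 0 := by
  rw [sum_excess_eq_card]
  have hcol : V.card = ∑ j, ((V.filter fun p => p.2 = j).card) :=
    Finset.card_eq_sum_card_fiberwise (fun p _ => Finset.mem_univ p.2)
  rw [hcol, Nat.cast_sum]
  apply Finset.sum_eq_zero
  intro j _
  obtain ⟨t, ht⟩ := h.2.2 j
  rw [ht, Nat.cast_add]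
  exact CharTwo.add_self_eq_zero _

open Classical in
/-- The image `[C]` of a diagram in the group algebra `ℤ/3ℤ[Ex_m]`: the sum of
`f(V,H)` over all decompositions `(V,H)` of `C` (taken as a representative of
its class mod `J_m`). -/
noncomputable def bracket {m n : ℕ} (D : Diagram m n) :
    MonoidAlgebra (ZMod 3) (Ex m) :=
  ∑ VH ∈ ((Finset.univ :
      Finset (Finset (Fin m × Fin n) × Finset (Fin m × Fin n))).filter
      (fun VH => IsDecomp D VH.1 VH.2)).attach,
    MonoidAlgebra.single
      (fEx VH.1.1 VH.1.2 ((Finset.mem_filter.mp VH.2).2).sum_excess_zero)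
      (1 : ZMod 3)

/-- The two-sided ideal `J_m` of `ℤ/3ℤ[Ex_m]` generated by
`(0,0,+1) + (0,0,−1)`. -/
noncomputable def Jm (m : ℕ) : TwoSidedIdeal (MonoidAlgebra (ZMod 3) (Ex m)) :=
  TwoSidedIdeal.span
    {MonoidAlgebra.single Ex.one' 1 + MonoidAlgebra.single Ex.negOne' 1}
section Aux
open Finset

variable {m n n₁ n₂ : ℕ}

lemma leftSq_injective : Function.Injective (leftSq (m := m) (n₁ := n₁) n₂) := by
  intro p q h
  simp only [leftSq, Prod.ext_iff] at h ⊢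
  exact ⟨h.1, Fin.ext (by simpa [Fin.ext_iff] using h.2)⟩

lemma rightSq_injective : Function.Injective (rightSq (m := m) (n₂ := n₂) n₁) := by
  intro p q h
  simp only [rightSq, Prod.ext_iff] at h ⊢
  refine ⟨h.1, Fin.ext ?_⟩
  have := h.2
  simp [Fin.ext_iff] at this
  omega

lemma leftSq_ne_rightSq (p : Fin m × Fin n₁) (q : Fin m × Fin n₂) :
    leftSq n₂ p ≠ rightSq n₁ q := by
  intro h
  have h2 := congrArg (fun x => (x.2 : ℕ)) h
  simp only [leftSq, rightSq, Fin.coe_castAdd, Fin.coe_natAdd] at h2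
  omega

lemma fin_split (q : Fin (n₁ + n₂)) :
    (∃ j : Fin n₁, q = Fin.castAdd n₂ j) ∨ (∃ j : Fin n₂, q = Fin.natAdd n₁ j) := by
  rcases lt_or_ge (q : ℕ) n₁ with h | h
  · exact Or.inl ⟨⟨q, h⟩, by simp [Fin.ext_iff]⟩
  · exact Or.inr ⟨⟨(q : ℕ) - n₁, by omega⟩, by simp [Fin.ext_iff]; omega⟩

/-- Left restriction of a set of squares of a concatenated diagram. -/
def splitL (S : Finset (Fin m × Fin (n₁ + n₂))) : Finset (Fin m × Fin n₁) :=
  univ.filter fun p => leftSq n₂ p ∈ S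

/-- Right restriction of a set of squares of a concatenated diagram. -/
def splitR (S : Finset (Fin m × Fin (n₁ + n₂))) : Finset (Fin m × Fin n₂) :=
  univ.filter fun p => rightSq n₁ p ∈ S

@[simp] lemma mem_splitL {S : Finset (Fin m × Fin (n₁ + n₂))} {p : Fin m × Fin n₁} :
    p ∈ splitL S ↔ leftSq n₂ p ∈ S := by simp [splitL]

@[simp] lemma mem_splitR {S : Finset (Fin m × Fin (n₁ + n₂))} {p : Fin m × Fin n₂} :
    p ∈ splitR S ↔ rightSq n₁ p ∈ S := by simp [splitR]

lemma disjoint_images (A : Finset (Fin m × Fin n₁)) (B : Finset (Fin m × Fin n₂)) :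
    Disjoint (A.image (leftSq n₂)) (B.image (rightSq n₁)) := by
  rw [Finset.disjoint_left]
  rintro x hx hy
  obtain ⟨p, -, rfl⟩ := Finset.mem_image.mp hx
  obtain ⟨q, -, hq⟩ := Finset.mem_image.mp hy
  exact leftSq_ne_rightSq p q hq.symm

lemma starPart_splits (S : Finset (Fin m × Fin (n₁ + n₂))) :
    starPart (splitL S) (splitR S) = S := by
  ext ⟨i, q⟩
  simp only [starPart, Finset.mem_union, Finset.mem_image, mem_splitL, mem_splitR]
  constructor
  · rintro (⟨p, hp, h⟩ | ⟨p, hp, h⟩) <;> (rw [← h]; exact hp)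
  · intro h
    rcases fin_split (n₁ := n₁) q with ⟨j, rfl⟩ | ⟨j, rfl⟩
    · exact Or.inl ⟨(i, j), h, rfl⟩
    · exact Or.inr ⟨(i, j), h, rfl⟩

lemma splitL_star (A : Finset (Fin m × Fin n₁)) (B : Finset (Fin m × Fin n₂)) :
    splitL (starPart A B) = A := by
  ext p
  simp only [mem_splitL, starPart, Finset.mem_union, Finset.mem_image]
  constructor
  · rintro (⟨q, hq, h⟩ | ⟨q, hq, h⟩)
    · rwa [← leftSq_injective h]
    · exact absurd h.symm (leftSq_ne_rightSq p q)
  · intro h; exact Or.inl ⟨p, h, rfl⟩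

lemma splitR_star (A : Finset (Fin m × Fin n₁)) (B : Finset (Fin m × Fin n₂)) :
    splitR (starPart A B) = B := by
  ext p
  simp only [mem_splitR, starPart, Finset.mem_union, Finset.mem_image]
  constructor
  · rintro (⟨q, hq, h⟩ | ⟨q, hq, h⟩)
    · exact absurd h (leftSq_ne_rightSq q p)
    · rwa [← rightSq_injective h]
  · intro h; exact Or.inr ⟨p, h, rfl⟩

end Aux
section Aux2
open Finset

variable {m n n₁ n₂ : ℕ}

lemma filter_image_left (A : Finset (Fin m × Fin n₁)) (P : Fin m × Fin (n₁ + n₂) → Prop)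
    [DecidablePred P] :
    (A.image (leftSq n₂)).filter P = (A.filter fun p => P (leftSq n₂ p)).image (leftSq n₂) := by
  rw [Finset.filter_image]

lemma filter_image_right (B : Finset (Fin m × Fin n₂)) (P : Fin m × Fin (n₁ + n₂) → Prop)
    [DecidablePred P] :
    (B.image (rightSq n₁)).filter P = (B.filter fun p => P (rightSq n₁ p)).image (rightSq n₁) := by
  rw [Finset.filter_image]

lemma excess_star (A : Finset (Fin m × Fin n₁)) (B : Finset (Fin m × Fin n₂)) (i : Fin m) :
    excess (starPart A B) i = excess A i + excess B i := by
  classical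
  unfold excess starPart
  rw [Finset.filter_union,
    Finset.card_union_of_disjoint
      ((disjoint_images A B).mono (Finset.filter_subset _ _) (Finset.filter_subset _ _)),
    filter_image_left, filter_image_right,
    Finset.card_image_of_injective _ leftSq_injective,
    Finset.card_image_of_injective _ rightSq_injective]
  push_cast
  congr 2

lemma col_star_left (A : Finset (Fin m × Fin n₁)) (B : Finset (Fin m × Fin n₂)) (j : Fin n₁) :
    ((starPart A B).filter fun p => p.2 = Fin.castAdd n₂ j).card
      = (A.filter fun p => p.2 = j).card := by
  classical
  unfold starPart
  rw [Finset.filter_union, filter_image_left, filter_image_right]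
  have h2 : (B.filter fun p => (rightSq n₁ p).2 = Fin.castAdd n₂ j) = ∅ := by
    rw [Finset.filter_eq_empty_iff]
    intro p _ h
    have := congrArg (fun x : Fin (n₁ + n₂) => (x : ℕ)) h
    simp only [rightSq, Fin.coe_natAdd, Fin.coe_castAdd] at this
    omega
  rw [h2]
  simp only [Finset.image_empty, Finset.union_empty]
  rw [Finset.card_image_of_injective _ leftSq_injective]
  congr 1
  apply Finset.filter_congr
  intro p _
  simp [leftSq, Fin.ext_iff]

lemma col_star_right (A : Finset (Fin m × Fin n₁)) (B : Finset (Fin m × Fin n₂)) (j : Fin n₂) :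
    ((starPart A B).filter fun p => p.2 = Fin.natAdd n₁ j).card
      = (B.filter fun p => p.2 = j).card := by
  classical
  unfold starPart
  rw [Finset.filter_union, filter_image_left, filter_image_right]
  have h1 : (A.filter fun p => (leftSq n₂ p).2 = Fin.natAdd n₁ j) = ∅ := by
    rw [Finset.filter_eq_empty_iff]
    intro p _ h
    have := congrArg (fun x : Fin (n₁ + n₂) => (x : ℕ)) h
    simp only [leftSq, Fin.coe_natAdd, Fin.coe_castAdd] at this
    omega
  rw [h1]
  simp only [Finset.image_empty, Finset.empty_union]
  rw [Finset.card_image_of_injective _ rightSq_injective]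
  congr 1
  apply Finset.filter_congr
  intro p _
  simp [rightSq, Fin.ext_iff]

lemma split_ext {S T : Finset (Fin m × Fin (n₁ + n₂))}
    (hL : splitL S = splitL T) (hR : splitR S = splitR T) : S = T := by
  rw [← starPart_splits S, hL, hR, starPart_splits]

lemma whites_hcat (C₁ : Diagram m n₁) (C₂ : Diagram m n₂) :
    whites (hcat C₁ C₂) = starPart (whites C₁) (whites C₂) := by
  classical
  apply split_ext
  · rw [splitL_star]
    ext p
    simp [mem_splitL, whites, leftSq]; simp [hcat, Fin.addCases_left]
  · rw [splitR_star]
    ext p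
    simp [mem_splitR, whites, rightSq]; simp [hcat, Fin.addCases_right]

lemma starPart_union (A A' : Finset (Fin m × Fin n₁)) (B B' : Finset (Fin m × Fin n₂)) :
    starPart (A ∪ A') (B ∪ B') = starPart A B ∪ starPart A' B' := by
  unfold starPart
  rw [Finset.image_union, Finset.image_union]
  ac_rfl

lemma isDecomp_star {C₁ : Diagram m n₁} {C₂ : Diagram m n₂}
    {V₁ H₁ : Finset (Fin m × Fin n₁)} {V₂ H₂ : Finset (Fin m × Fin n₂)}
    (h1 : IsDecomp C₁ V₁ H₁) (h2 : IsDecomp C₂ V₂ H₂) :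
    IsDecomp (hcat C₁ C₂) (starPart V₁ V₂) (starPart H₁ H₂) := by
  refine ⟨?_, ?_, ?_⟩
  · unfold starPart
    rw [Finset.disjoint_union_left]
    constructor <;> rw [Finset.disjoint_union_right]
    · exact ⟨(Finset.disjoint_image leftSq_injective).mpr h1.1, disjoint_images _ _⟩
    · exact ⟨(disjoint_images _ _).symm, (Finset.disjoint_image rightSq_injective).mpr h2.1⟩
  · rw [← starPart_union, h1.2.1, h2.2.1, whites_hcat]
  · intro j
    rcases fin_split (n₁ := n₁) j with ⟨j', rfl⟩ | ⟨j', rfl⟩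
    · rw [col_star_left]; exact h1.2.2 j'
    · rw [col_star_right]; exact h2.2.2 j'

lemma splitL_union (S T : Finset (Fin m × Fin (n₁ + n₂))) :
    splitL (S ∪ T) = splitL S ∪ splitL T := by
  ext p; simp [mem_splitL]

lemma splitR_union (S T : Finset (Fin m × Fin (n₁ + n₂))) :
    splitR (S ∪ T) = splitR S ∪ splitR T := by
  ext p; simp [mem_splitR]

lemma isDecomp_splitL {C₁ : Diagram m n₁} {C₂ : Diagram m n₂}
    {V H : Finset (Fin m × Fin (n₁ + n₂))} (h : IsDecomp (hcat C₁ C₂) V H) :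
    IsDecomp C₁ (splitL V) (splitL H) := by
  refine ⟨?_, ?_, ?_⟩
  · rw [Finset.disjoint_left]
    intro p hp hq
    exact (Finset.disjoint_left.mp h.1) (mem_splitL.mp hp) (mem_splitL.mp hq)
  · rw [← splitL_union, h.2.1, whites_hcat, splitL_star]
  · intro j
    have := h.2.2 (Fin.castAdd n₂ j)
    rwa [← starPart_splits V, col_star_left] at this

lemma isDecomp_splitR {C₁ : Diagram m n₁} {C₂ : Diagram m n₂}
    {V H : Finset (Fin m × Fin (n₁ + n₂))} (h : IsDecomp (hcat C₁ C₂) V H) :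
    IsDecomp C₂ (splitR V) (splitR H) := by
  refine ⟨?_, ?_, ?_⟩
  · rw [Finset.disjoint_left]
    intro p hp hq
    exact (Finset.disjoint_left.mp h.1) (mem_splitR.mp hp) (mem_splitR.mp hq)
  · rw [← splitR_union, h.2.1, whites_hcat, splitR_star]
  · intro j
    have := h.2.2 (Fin.natAdd n₁ j)
    rwa [← starPart_splits V, col_star_right] at this

end Aux2
section Aux3
open Finset

variable {m n n₁ n₂ : ℕ}

lemma card_filter_map_prod {α β γ δ : Type*} [DecidableEq γ] [DecidableEq δ]
    (A : Finset α) (B : Finset β) (f : α → γ) (g : β → δ)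
    (hf : Function.Injective f) (hg : Function.Injective g)
    (P : γ × δ → Prop) [DecidablePred P] (Q : α × β → Prop) [DecidablePred Q]
    (hPQ : ∀ a b, P (f a, g b) ↔ Q (a, b)) :
    ((A.image f ×ˢ B.image g).filter P).card = ((A ×ˢ B).filter Q).card := by
  symm
  apply Finset.card_bij (fun x _ => (f x.1, g x.2))
  · intro x hx
    simp only [Finset.mem_filter, Finset.mem_product, Finset.mem_image] at hx ⊢
    exact ⟨⟨⟨x.1, hx.1.1, rfl⟩, ⟨x.2, hx.1.2, rfl⟩⟩, (hPQ x.1 x.2).mpr hx.2⟩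
  · intro x hx y hy hxy
    obtain ⟨h1, h2⟩ := Prod.ext_iff.mp hxy
    exact Prod.ext (hf h1) (hg h2)
  · intro b hb
    simp only [Finset.mem_filter, Finset.mem_product, Finset.mem_image] at hb
    obtain ⟨⟨⟨a1, ha1, e1⟩, ⟨a2, ha2, e2⟩⟩, hP⟩ := hb
    refine ⟨(a1, a2), ?_, ?_⟩
    · simp only [Finset.mem_filter, Finset.mem_product]
      refine ⟨⟨ha1, ha2⟩, (hPQ a1 a2).mp ?_⟩
      rwa [e1, e2, ← Prod.ext_iff.mpr (⟨rfl, rfl⟩ : (b.1, b.2).1 = b.1 ∧ (b.1, b.2).2 = b.2)]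
    · rw [e1, e2]
  
lemma disjoint_prod_left {α β : Type*} [DecidableEq α] [DecidableEq β]
    {L R : Finset α} (X Y : Finset β) (h : Disjoint L R) :
    Disjoint (L ×ˢ X) (R ×ˢ Y) := by
  rw [Finset.disjoint_left] at h ⊢
  intro p hp hq
  rw [Finset.mem_product] at hp hq
  exact h hp.1 hq.1

lemma disjoint_prod_right {α β : Type*} [DecidableEq α] [DecidableEq β]
    (X Y : Finset α) {L R : Finset β} (h : Disjoint L R) :
    Disjoint (X ×ˢ L) (Y ×ˢ R) := by
  rw [Finset.disjoint_left] at h ⊢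
  intro p hp hq
  rw [Finset.mem_product] at hp hq
  exact h hp.2 hq.2

lemma card_filter_union_prod {α : Type*} [DecidableEq α]
    (L R L' R' : Finset α) (P : α × α → Prop) [DecidablePred P]
    (h1 : Disjoint L R) (h2 : Disjoint L' R') :
    (((L ∪ R) ×ˢ (L' ∪ R')).filter P).card
      = ((L ×ˢ L').filter P).card + ((L ×ˢ R').filter P).card
        + ((R ×ˢ L').filter P).card + ((R ×ˢ R').filter P).card := by
  rw [Finset.union_product, Finset.product_union, Finset.product_union,
    Finset.filter_union, Finset.filter_union, Finset.filter_union]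
  rw [Finset.card_union_of_disjoint, Finset.card_union_of_disjoint,
    Finset.card_union_of_disjoint]
  · ring
  · exact ((disjoint_prod_right R R h2).mono (Finset.filter_subset _ _) (Finset.filter_subset _ _))
  · exact ((disjoint_prod_right L L h2).mono (Finset.filter_subset _ _) (Finset.filter_subset _ _))
  · refine Disjoint.mono (Finset.union_subset_iff.mpr ⟨?_, ?_⟩) (Finset.union_subset_iff.mpr ⟨?_, ?_⟩) (disjoint_prod_left (L' ∪ R') (L' ∪ R') h1) <;>
      first
        | exact (Finset.filter_subset _ _).trans (Finset.product_subset_product_right Finset.subset_union_left)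
        | exact (Finset.filter_subset _ _).trans (Finset.product_subset_product_right Finset.subset_union_right)

lemma card_filter_rows (S : Finset (Fin m × Fin n₁)) (T : Finset (Fin m × Fin n₂))
    (R : Fin m → Fin m → Prop) [DecidableRel R] :
    ((S ×ˢ T).filter fun pq => R pq.1.1 pq.2.1).card
      = ∑ ij ∈ univ.filter (fun ij : Fin m × Fin m => R ij.1 ij.2),
          (S.filter fun p => p.1 = ij.1).card * (T.filter fun p => p.1 = ij.2).card := by
  classical
  rw [Finset.card_eq_sum_card_fiberwise
    (f := fun pq : (Fin m × Fin n₁) × (Fin m × Fin n₂) => (pq.1.1, pq.2.1))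
    (t := univ.filter fun ij : Fin m × Fin m => R ij.1 ij.2)
    (fun pq hpq => by
      simp only [Finset.mem_coe, Finset.mem_filter] at hpq ⊢
      exact ⟨Finset.mem_univ _, hpq.2⟩)]
  apply Finset.sum_congr rfl
  intro ij hij
  simp only [Finset.mem_filter, Finset.mem_univ, true_and] at hij
  rw [← Finset.card_product]
  congr 1
  ext pq
  simp only [Finset.mem_filter, Finset.mem_product, Prod.ext_iff]
  constructor
  · rintro ⟨⟨⟨hS, hT⟩, -⟩, h1, h2⟩
    exact ⟨⟨hS, h1⟩, ⟨hT, h2⟩⟩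
  · rintro ⟨⟨hS, h1⟩, hT, h2⟩
    refine ⟨⟨⟨hS, hT⟩, ?_⟩, h1, h2⟩
    rw [h1, h2]; exact hij

end Aux3
section Aux4
open Finset

variable {m n n₁ n₂ : ℕ}

lemma invV_star (A : Finset (Fin m × Fin n₁)) (B : Finset (Fin m × Fin n₂)) :
    invV (starPart A B)
      = invV A + invV B + ((B ×ˢ A).filter fun pq => pq.1.1 < pq.2.1).card := by
  classical
  unfold invV starPart
  rw [card_filter_union_prod _ _ _ _ _ (disjoint_images A B) (disjoint_images A B)]
  have hLL := card_filter_map_prod A A (leftSq n₂) (leftSq n₂)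
    leftSq_injective leftSq_injective
    (fun pq => rlt pq.1 pq.2 ∧ pq.1.1 < pq.2.1 ∧ pq.2.2 < pq.1.2)
    (fun pq => rlt pq.1 pq.2 ∧ pq.1.1 < pq.2.1 ∧ pq.2.2 < pq.1.2)
    (fun a b => by
      have ha := a.2.isLt; have hb := b.2.isLt
      simp only [rlt, leftSq, rightSq, Fin.lt_def, Fin.le_def, Fin.ext_iff, Fin.coe_castAdd, Fin.coe_natAdd, iff_false, not_and, not_lt, not_or]
      try omega)
  have hLR := card_filter_map_prod A B (leftSq n₂) (rightSq n₁)
    leftSq_injective rightSq_injective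
    (fun pq => rlt pq.1 pq.2 ∧ pq.1.1 < pq.2.1 ∧ pq.2.2 < pq.1.2)
    (fun _ => False)
    (fun a b => by
      have ha := a.2.isLt; have hb := b.2.isLt
      simp only [rlt, leftSq, rightSq, Fin.lt_def, Fin.le_def, Fin.ext_iff, Fin.coe_castAdd, Fin.coe_natAdd, iff_false, not_and, not_lt, not_or]
      omega)
  have hRL := card_filter_map_prod B A (rightSq n₁) (leftSq n₂)
    rightSq_injective leftSq_injective
    (fun pq => rlt pq.1 pq.2 ∧ pq.1.1 < pq.2.1 ∧ pq.2.2 < pq.1.2)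
    (fun pq => pq.1.1 < pq.2.1)
    (fun a b => by
      have ha := a.2.isLt; have hb := b.2.isLt
      simp only [rlt, leftSq, rightSq, Fin.lt_def, Fin.le_def, Fin.ext_iff, Fin.coe_castAdd, Fin.coe_natAdd, iff_false, not_and, not_lt, not_or]
      omega)
  have hRR := card_filter_map_prod B B (rightSq n₁) (rightSq n₁)
    rightSq_injective rightSq_injective
    (fun pq => rlt pq.1 pq.2 ∧ pq.1.1 < pq.2.1 ∧ pq.2.2 < pq.1.2)
    (fun pq => rlt pq.1 pq.2 ∧ pq.1.1 < pq.2.1 ∧ pq.2.2 < pq.1.2)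
    (fun a b => by
      have ha := a.2.isLt; have hb := b.2.isLt
      simp only [rlt, leftSq, rightSq, Fin.lt_def, Fin.le_def, Fin.ext_iff, Fin.coe_castAdd, Fin.coe_natAdd, iff_false, not_and, not_lt, not_or]
      try omega)
  rw [hLL, hLR, hRL, hRR]
  simp only [Finset.filter_false, Finset.card_empty]
  ring

lemma invMix_star (V₁ H₁ : Finset (Fin m × Fin n₁)) (V₂ H₂ : Finset (Fin m × Fin n₂)) :
    invMix (starPart V₁ V₂) (starPart H₁ H₂)
      = invMix V₁ H₁ + invMix V₂ H₂
        + ((H₁ ×ˢ V₂).filter fun pq => pq.1.1 ≤ pq.2.1).card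
        + ((H₂ ×ˢ V₁).filter fun pq => pq.1.1 < pq.2.1).card := by
  classical
  unfold invMix starPart
  rw [card_filter_union_prod _ _ _ _ _ (disjoint_images H₁ H₂) (disjoint_images V₁ V₂)]
  have hLL := card_filter_map_prod H₁ V₁ (leftSq n₂) (leftSq n₂)
    leftSq_injective leftSq_injective
    (fun pq => rlt pq.1 pq.2) (fun pq => rlt pq.1 pq.2)
    (fun a b => by
      have ha := a.2.isLt; have hb := b.2.isLt
      simp only [rlt, leftSq, rightSq, Fin.lt_def, Fin.le_def, Fin.ext_iff, Fin.coe_castAdd, Fin.coe_natAdd, iff_false, not_and, not_lt, not_or]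
      try omega)
  have hLR := card_filter_map_prod H₁ V₂ (leftSq n₂) (rightSq n₁)
    leftSq_injective rightSq_injective
    (fun pq => rlt pq.1 pq.2) (fun pq => pq.1.1 ≤ pq.2.1)
    (fun a b => by
      have ha := a.2.isLt; have hb := b.2.isLt
      simp only [rlt, leftSq, rightSq, Fin.lt_def, Fin.le_def, Fin.ext_iff, Fin.coe_castAdd, Fin.coe_natAdd, iff_false, not_and, not_lt, not_or]
      omega)
  have hRL := card_filter_map_prod H₂ V₁ (rightSq n₁) (leftSq n₂)
    rightSq_injective leftSq_injective
    (fun pq => rlt pq.1 pq.2) (fun pq => pq.1.1 < pq.2.1)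
    (fun a b => by
      have ha := a.2.isLt; have hb := b.2.isLt
      simp only [rlt, leftSq, rightSq, Fin.lt_def, Fin.le_def, Fin.ext_iff, Fin.coe_castAdd, Fin.coe_natAdd, iff_false, not_and, not_lt, not_or]
      omega)
  have hRR := card_filter_map_prod H₂ V₂ (rightSq n₁) (rightSq n₁)
    rightSq_injective rightSq_injective
    (fun pq => rlt pq.1 pq.2) (fun pq => rlt pq.1 pq.2)
    (fun a b => by
      have ha := a.2.isLt; have hb := b.2.isLt
      simp only [rlt, leftSq, rightSq, Fin.lt_def, Fin.le_def, Fin.ext_iff, Fin.coe_castAdd, Fin.coe_natAdd, iff_false, not_and, not_lt, not_or]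
      try omega)
  rw [hLL, hLR, hRL, hRR]
  ring

end Aux4
section Aux5
open Finset

variable {m n n₁ n₂ : ℕ}

lemma val_cast2 : ∀ x : ZMod 2, ((x.val : ℕ) : ZMod 2) = x := by decide

lemma neg_one_pow_congr' {a b : ℕ} (h : ((a : ℕ) : ZMod 2) = ((b : ℕ) : ZMod 2)) :
    ((-1 : ℤˣ)) ^ a = (-1) ^ b := by
  have h2 : a % 2 = b % 2 := (ZMod.natCast_eq_natCast_iff a b 2).mp h
  have e : ∀ c : ℕ, ((-1 : ℤˣ)) ^ c = (-1) ^ (c % 2) := by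
    intro c
    conv_lhs => rw [← Nat.div_add_mod c 2]
    rw [pow_add, pow_mul, neg_one_sq, one_pow, one_mul]
  rw [e a, e b, h2]

lemma cross_parity (V₁ H₁ : Finset (Fin m × Fin n₁)) (V₂ H₂ : Finset (Fin m × Fin n₂))
    (x y : Ex m) (hxv : x.v = excess V₁) (hxh : x.h = excess H₁)
    (hyv : y.v = excess V₂) (hyh : y.h = excess H₂) :
    ((((V₂ ×ˢ V₁).filter fun pq => pq.1.1 < pq.2.1).card
      + ((H₁ ×ˢ V₂).filter fun pq => pq.1.1 ≤ pq.2.1).card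
      + ((H₂ ×ˢ V₁).filter fun pq => pq.1.1 < pq.2.1).card : ℕ) : ZMod 2)
      = ((Ex.expo x y : ℕ) : ZMod 2) := by
  rw [card_filter_rows V₂ V₁ (fun a b => a < b),
    card_filter_rows H₁ V₂ (fun a b => a ≤ b),
    card_filter_rows H₂ V₁ (fun a b => a < b)]
  unfold Ex.expo
  rw [hxv, hxh, hyv, hyh]
  push_cast [val_cast2]
  unfold excess
  have split : ∀ p ∈ univ.filter (fun p : Fin m × Fin m => p.1 < p.2),
      (((V₁.filter fun q => q.1 = p.2).card : ZMod 2)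
        * (((V₂.filter fun q => q.1 = p.1).card : ZMod 2)
            + ((H₂.filter fun q => q.1 = p.1).card : ZMod 2)))
      = ((V₂.filter fun q => q.1 = p.1).card : ZMod 2)
          * ((V₁.filter fun q => q.1 = p.2).card : ZMod 2)
        + ((H₂.filter fun q => q.1 = p.1).card : ZMod 2)
          * ((V₁.filter fun q => q.1 = p.2).card : ZMod 2) := fun p _ => by ring
  rw [Finset.sum_congr rfl split, Finset.sum_add_distrib]
  have e2 : ∑ p ∈ univ.filter (fun p : Fin m × Fin m => p.1 ≤ p.2),
      ((V₂.filter fun q => q.1 = p.2).card : ZMod 2)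
        * ((H₁.filter fun q => q.1 = p.1).card : ZMod 2)
      = ∑ p ∈ univ.filter (fun p : Fin m × Fin m => p.1 ≤ p.2),
        ((H₁.filter fun q => q.1 = p.1).card : ZMod 2)
          * ((V₂.filter fun q => q.1 = p.2).card : ZMod 2) :=
    Finset.sum_congr rfl fun p _ => by ring
  rw [e2]
  ring

/-- Total version of `fEx`. -/
noncomputable def fExt {m n : ℕ} (V H : Finset (Fin m × Fin n)) : Ex m :=
  if h : ∑ i, excess V i = 0 then fEx V H h else 1

lemma fExt_eq {V H : Finset (Fin m × Fin n)} (h : ∑ i, excess V i = 0) :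
    fExt V H = fEx V H h := by
  unfold fExt
  rw [dif_pos h]

lemma fExt_star (V₁ H₁ : Finset (Fin m × Fin n₁)) (V₂ H₂ : Finset (Fin m × Fin n₂))
    (hA : ∑ i, excess V₁ i = 0) (hB : ∑ i, excess V₂ i = 0) :
    fExt (starPart V₁ V₂) (starPart H₁ H₂) = fExt V₁ H₁ * fExt V₂ H₂ := by
  have hS : ∑ i, excess (starPart V₁ V₂) i = 0 := by
    rw [Finset.sum_congr rfl (fun i _ => excess_star V₁ V₂ i), Finset.sum_add_distrib,
      hA, hB, add_zero]
  rw [fExt_eq hS, fExt_eq hA, fExt_eq hB, Ex.mul_def]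
  refine Ex.ext ?_ ?_ ?_
  · show excess (starPart V₁ V₂) = excess V₁ + excess V₂
    funext i; exact excess_star V₁ V₂ i
  · show excess (starPart H₁ H₂) = excess H₁ + excess H₂
    funext i; exact excess_star H₁ H₂ i
  · show sgnVH (starPart V₁ V₂) (starPart H₁ H₂)
      = sgnVH V₁ H₁ * sgnVH V₂ H₂ * (-1) ^ Ex.expo (fEx V₁ H₁ hA) (fEx V₂ H₂ hB)
    unfold sgnVH
    rw [← pow_add, ← pow_add]
    apply neg_one_pow_congr'
    rw [invV_star, invMix_star]
    have hcp := cross_parity V₁ H₁ V₂ H₂ (fEx V₁ H₁ hA) (fEx V₂ H₂ hB) rfl rfl rfl rfl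
    push_cast
    push_cast at hcp
    linear_combination hcp

open Classical in
lemma bracket_eq {m n : ℕ} (D : Diagram m n) :
    bracket D = ∑ VH ∈ ((Finset.univ :
        Finset (Finset (Fin m × Fin n) × Finset (Fin m × Fin n))).filter
        (fun VH => IsDecomp D VH.1 VH.2)),
      MonoidAlgebra.single (fExt VH.1 VH.2) (1 : ZMod 3) := by
  unfold bracket
  rw [← Finset.sum_attach (((Finset.univ :
      Finset (Finset (Fin m × Fin n) × Finset (Fin m × Fin n))).filter
      (fun VH => IsDecomp D VH.1 VH.2)))
    (fun VH => MonoidAlgebra.single (fExt VH.1 VH.2) (1 : ZMod 3))]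
  apply Finset.sum_congr rfl
  intro x _
  have hx : ∑ i, excess (x.1).1 i = 0 := ((Finset.mem_filter.mp x.2).2).sum_excess_zero
  rw [fExt_eq hx]

end Aux5

/-- For all `m`-row diagrams `C₁, C₂`,
`[C₁ ⋆ C₂] = [C₁] · [C₂]` in `ℤ/3ℤ[Ex_m]/J_m`; i.e. `C ↦ [C]` is a semigroup
homomorphism from the concatenation semigroup of `m`-row diagrams to the
multiplicative semigroup of `ℤ/3ℤ[Ex_m]/J_m`.  (Equality in the quotient is
expressed by the difference lying in `J_m`.) -/
theorem bracket_hcat (m n₁ n₂ : ℕ) (C₁ : Diagram m n₁) (C₂ : Diagram m n₂) :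
    bracket (hcat C₁ C₂) - bracket C₁ * bracket C₂ ∈ Jm m := by
  classical
  have key : bracket (hcat C₁ C₂) = bracket C₁ * bracket C₂ := by
    rw [bracket_eq, bracket_eq, bracket_eq, Finset.sum_mul_sum]
    simp only [MonoidAlgebra.single_mul_single, one_mul]
    rw [← Finset.sum_product'
      (f := fun (p : Finset (Fin m × Fin n₁) × Finset (Fin m × Fin n₁))
          (q : Finset (Fin m × Fin n₂) × Finset (Fin m × Fin n₂)) =>
        MonoidAlgebra.single (fExt p.1 p.2 * fExt q.1 q.2) (1 : ZMod 3))]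
    refine Finset.sum_nbij'
      (i := fun VH => ((splitL VH.1, splitL VH.2), (splitR VH.1, splitR VH.2)))
      (j := fun pq => (starPart pq.1.1 pq.2.1, starPart pq.1.2 pq.2.2))
      ?_ ?_ ?_ ?_ ?_
    · intro VH hVH
      rw [Finset.mem_filter] at hVH
      rw [Finset.mem_product, Finset.mem_filter, Finset.mem_filter]
      exact ⟨⟨Finset.mem_univ _, isDecomp_splitL hVH.2⟩,
        ⟨Finset.mem_univ _, isDecomp_splitR hVH.2⟩⟩
    · intro pq hpq
      rw [Finset.mem_product, Finset.mem_filter, Finset.mem_filter] at hpq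
      rw [Finset.mem_filter]
      exact ⟨Finset.mem_univ _, isDecomp_star hpq.1.2 hpq.2.2⟩
    · intro VH _
      exact Prod.ext (starPart_splits VH.1) (starPart_splits VH.2)
    · intro pq _
      refine Prod.ext (Prod.ext ?_ ?_) (Prod.ext ?_ ?_) <;>
        simp [splitL_star, splitR_star]
    · intro VH hVH
      rw [Finset.mem_filter] at hVH
      have hA := (isDecomp_splitL hVH.2).sum_excess_zero
      have hB := (isDecomp_splitR hVH.2).sum_excess_zero
      congr 1
      rw [← fExt_star _ _ _ _ hA hB, starPart_splits, starPart_splits]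
  rw [key, sub_self]
  exact (Jm m).zero_mem
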